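/- arXiv:1304.0098 — 11 statements merged into one kernel-verified Lean document; each statement's English description precedes it below -/
import Mathlib

section
/- Let R be a ring with 1 and (a,b) ∈ R² an admissible pair (i.e., it is the first row of some invertible 2×2 matrix over R). If s ∈ R has a left inverse, then R·(a,b) = R·(s·a, s·b) as left submodules of R²; conversely, if R·(a,b) = R·(s·a, s·b), then s has a left inverse. -/
open Matrix

/-- A pair `(a,b)` is admissible if it is the first row of an invertible 2×2 matrix. -/
def Admissible {R : Type*} [Ring R] (a b : R) : Prop :=
  ∃ c d : R, IsUnit (Matrix.of ![![a, b], ![c, d]])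

/-- The cyclic left submodule of `R²` generated by a vector. -/
def cyc {R : Type*} [Ring R] (v : Fin 2 → R) : Submodule R (Fin 2 → R) :=
  Submodule.span R {v}

/-- The projective line over `R`: the orbit of `R·(1,0)` under `GL₂(R)`
(acting by right multiplication on row vectors). -/
def ProjLine (R : Type*) [Ring R] : Set (Submodule R (Fin 2 → R)) :=
  {p | ∃ γ : (Matrix (Fin 2) (Fin 2) R)ˣ,
    p = cyc (Matrix.vecMul ![1, 0] (γ.val))}

/-- Two points are distant if the pair lies in the `GL₂(R)`-orbit of
`(R·(1,0), R·(0,1))`. -/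
def Distant {R : Type*} [Ring R] (p q : Submodule R (Fin 2 → R)) : Prop :=
  ∃ γ : (Matrix (Fin 2) (Fin 2) R)ˣ,
    p = cyc (Matrix.vecMul ![1, 0] (γ.val)) ∧
    q = cyc (Matrix.vecMul ![0, 1] (γ.val))

theorem stmt0 {R : Type*} [Ring R] (a b s : R) (h : Admissible a b) :
    (∃ l : R, l * s = 1) ↔ cyc ![a, b] = cyc ![s * a, s * b] := by
  have hsv : ∀ (t : R), t • (![a, b] : Fin 2 → R) = ![t * a, t * b] := by
    intro t
    funext i
    fin_cases i <;> simp
  constructor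
  · rintro ⟨l, hl⟩
    apply le_antisymm
    · rw [cyc, Submodule.span_le, Set.singleton_subset_iff]
      have : (![a, b] : Fin 2 → R) = l • ![s * a, s * b] := by
        funext i
        fin_cases i <;> simp [← mul_assoc, hl]
      rw [this]
      exact Submodule.smul_mem _ _ (Submodule.mem_span_singleton_self _)
    · rw [cyc, Submodule.span_le, Set.singleton_subset_iff]
      rw [← hsv s]
      exact Submodule.smul_mem _ _ (Submodule.mem_span_singleton_self _)
  · intro heq
    have hmem : (![a, b] : Fin 2 → R) ∈ cyc ![s * a, s * b] := by
      rw [← heq]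
      exact Submodule.mem_span_singleton_self _
    rw [cyc, Submodule.mem_span_singleton] at hmem
    obtain ⟨r, hr⟩ := hmem
    have ha : r * (s * a) = a := by
      have := congrFun hr 0; simpa using this
    have hb : r * (s * b) = b := by
      have := congrFun hr 1; simpa using this
    obtain ⟨c, d, hM⟩ := h
    obtain ⟨u, hu⟩ := hM
    refine ⟨r, ?_⟩
    have h00 : a * u.inv 0 0 + b * u.inv 1 0 = 1 := by
      have h1 : (u.val * u.inv) 0 0 = (1 : Matrix (Fin 2) (Fin 2) R) 0 0 := by
        rw [u.val_inv]
      rw [Matrix.mul_apply, Fin.sum_univ_two, hu] at h1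
      simp only [Matrix.of_apply, Matrix.cons_val', Matrix.cons_val_zero, Matrix.cons_val_one,
        Matrix.head_cons, Matrix.empty_val', Matrix.cons_val_fin_one, Matrix.one_apply_eq] at h1
      exact h1
    calc r * s = (r * s) * (a * u.inv 0 0 + b * u.inv 1 0) := by rw [h00, mul_one]
    _ = (r * (s * a)) * u.inv 0 0 + (r * (s * b)) * u.inv 1 0 := by noncomm_ring
    _ = 1 := by rw [ha, hb, h00]
end

section
/- Let R be a ring with 1 and (a,b) ∈ R² an admissible pair. For s ∈ R, the pair (s·a, s·b) is admissible if and only if s has a right inverse. -/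
open Matrix

theorem stmt1 {R : Type*} [Ring R] (a b s : R) (h : Admissible a b) :
    Admissible (s * a) (s * b) ↔ ∃ r : R, s * r = 1 := by
  constructor
  · rintro ⟨c, d, hN⟩
    obtain ⟨P, hP⟩ := hN.exists_right_inv
    refine ⟨a * P 0 0 + b * P 1 0, ?_⟩
    have h00 := congrFun (congrFun hP 0) 0
    simp [Matrix.mul_apply, Fin.sum_univ_two, Matrix.one_apply] at h00
    rw [mul_add, ← mul_assoc, ← mul_assoc]
    exact h00
  · rintro ⟨r, hr⟩
    obtain ⟨c, d, hM⟩ := h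
    set D : Matrix (Fin 2) (Fin 2) R := Matrix.of ![![s, 0], ![1 - r * s, r]] with hD
    set E : Matrix (Fin 2) (Fin 2) R := Matrix.of ![![r, 1 - r * s], ![0, s]] with hE
    have h1 : s * (1 - r * s) = 0 := by
      rw [mul_sub, mul_one, ← mul_assoc, hr, one_mul, sub_self]
    have h2 : (1 - r * s) * r = 0 := by
      rw [sub_mul, one_mul, mul_assoc, hr, mul_one, sub_self]
    have h3 : (1 - r * s) * (1 - r * s) + r * s = 1 := by
      have : (1 - r * s) * (1 - r * s) = 1 - r * s - (1 - r * s) * (r * s) := by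
        noncomm_ring
      rw [this, ← mul_assoc, h2, zero_mul, sub_zero, sub_add_cancel]
    have h4 : r * s + (1 - r * s) * (1 - r * s) = 1 := by rw [add_comm]; exact h3
    have hDE : D * E = 1 := by
      ext i j
      fin_cases i <;> fin_cases j <;>
        simp [hD, hE, Matrix.mul_apply, Fin.sum_univ_two, Matrix.one_apply,
          hr, h1, h2, h3, h4]
    have hED : E * D = 1 := by
      ext i j
      fin_cases i <;> fin_cases j <;>
        simp [hD, hE, Matrix.mul_apply, Fin.sum_univ_two, Matrix.one_apply,
          hr, h1, h2, h3, h4]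
    have hDu : IsUnit D := ⟨⟨D, E, hDE, hED⟩, rfl⟩
    have hNu : IsUnit (D * Matrix.of ![![a, b], ![c, d]]) := hDu.mul hM
    refine ⟨(D * Matrix.of ![![a, b], ![c, d]]) 1 0,
      (D * Matrix.of ![![a, b], ![c, d]]) 1 1, ?_⟩
    have heq : Matrix.of ![![s * a, s * b],
        ![(D * Matrix.of ![![a, b], ![c, d]]) 1 0,
          (D * Matrix.of ![![a, b], ![c, d]]) 1 1]]
        = D * Matrix.of ![![a, b], ![c, d]] := by
      ext i j
      fin_cases i <;> fin_cases j <;>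
        simp [hD, Matrix.mul_apply, Fin.sum_univ_two]
    rw [heq]
    exact hNu
end

section
/- A ring R is Dedekind-finite (i.e., a·b = 1 implies b·a = 1 for all a,b ∈ R) if and only if for every point p of the projective line over R (i.e., every submodule in the GL₂(R)-orbit of R·(1,0)), every generator (a,b) of p with p = R·(a,b) is an admissible pair. -/
open Matrix

lemma mem_cyc' {R : Type*} [Ring R] (v w : Fin 2 → R) :
    v ∈ cyc w ↔ ∃ r : R, r • w = v := by
  simp [cyc, Submodule.mem_span_singleton]

lemma smul_vecMul' {R : Type*} [Ring R] (x : R) (v : Fin 2 → R)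
    (M : Matrix (Fin 2) (Fin 2) R) :
    x • Matrix.vecMul v M = Matrix.vecMul (x • v) M := by
  funext j
  simp [Matrix.vecMul, dotProduct, Fin.sum_univ_two, mul_add, mul_assoc]

theorem stmt5 {R : Type*} [Ring R] :
    (∀ a b : R, a * b = 1 → b * a = 1) ↔
      ∀ p ∈ ProjLine R, ∀ a b : R, p = cyc ![a, b] → Admissible a b := by
  constructor
  · rintro hdf p ⟨γ, rfl⟩ a b hp
    have hws : Matrix.vecMul ![1, 0] γ.val ∈ cyc ![a, b] := by
      rw [← hp]; exact Submodule.mem_span_singleton_self _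
    have habm : (![a, b] : Fin 2 → R) ∈ cyc (Matrix.vecMul ![1, 0] γ.val) := by
      rw [hp]; exact Submodule.mem_span_singleton_self _
    obtain ⟨s, hs⟩ := (mem_cyc' _ _).1 hws
    obtain ⟨r, hr⟩ := (mem_cyc' _ _).1 habm
    have hinj : ∀ x : R, x • Matrix.vecMul ![1, 0] γ.val = 0 → x = 0 := by
      intro x hx
      rw [smul_vecMul'] at hx
      have h2 : Matrix.vecMul (Matrix.vecMul (x • ![1, 0]) γ.val) (γ⁻¹).val =
          Matrix.vecMul (0 : Fin 2 → R) (γ⁻¹).val := by rw [hx]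
      rw [Matrix.vecMul_vecMul, Units.mul_inv, Matrix.vecMul_one, Matrix.zero_vecMul] at h2
      have := congrFun h2 0
      simpa using this
    have hsr : s * r = 1 := by
      have h1 : (s * r) • Matrix.vecMul ![1, 0] γ.val = Matrix.vecMul ![1, 0] γ.val := by
        rw [mul_smul, hr, hs]
      have h2 : (s * r - 1) • Matrix.vecMul ![1, 0] γ.val = 0 := by
        rw [sub_smul, one_smul, h1, sub_self]
      exact sub_eq_zero.1 (hinj _ h2)
    have hrs : r * s = 1 := hdf s r hsr
    have ha : a = r * γ.val 0 0 := by
      have := congrFun hr 0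
      simp only [Pi.smul_apply, Matrix.vecMul, dotProduct, Fin.sum_univ_two,
        Matrix.cons_val_zero, Matrix.cons_val_one, Matrix.head_cons, one_mul, zero_mul,
        add_zero, smul_eq_mul] at this
      exact this.symm
    have hb : b = r * γ.val 0 1 := by
      have := congrFun hr 1
      simp only [Pi.smul_apply, Matrix.vecMul, dotProduct, Fin.sum_univ_two,
        Matrix.cons_val_zero, Matrix.cons_val_one, Matrix.head_cons, one_mul, zero_mul,
        add_zero, smul_eq_mul] at this
      exact this.symm
    have hD1 : Matrix.of ![![r, (0:R)], ![0, 1]] * Matrix.of ![![s, 0], ![0, 1]] = 1 := by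
      ext i j
      fin_cases i <;> fin_cases j <;>
        simp [Matrix.mul_apply, Fin.sum_univ_two, hrs, Matrix.one_apply]
    have hD2 : Matrix.of ![![s, (0:R)], ![0, 1]] * Matrix.of ![![r, 0], ![0, 1]] = 1 := by
      ext i j
      fin_cases i <;> fin_cases j <;>
        simp [Matrix.mul_apply, Fin.sum_univ_two, hsr, Matrix.one_apply]
    obtain ⟨D, hD⟩ : ∃ D : (Matrix (Fin 2) (Fin 2) R)ˣ,
        D.val = Matrix.of ![![r, 0], ![0, 1]] :=
      ⟨⟨Matrix.of ![![r, 0], ![0, 1]], Matrix.of ![![s, 0], ![0, 1]], hD1, hD2⟩, rfl⟩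
    refine ⟨(D * γ).val 1 0, (D * γ).val 1 1, ?_⟩
    have heq2 : Matrix.of ![![a, b], ![(D * γ).val 1 0, (D * γ).val 1 1]] = (D * γ).val := by
      ext i j
      fin_cases i <;> fin_cases j <;>
        simp [Units.val_mul, hD, Matrix.mul_apply, Fin.sum_univ_two, ha, hb]
    rw [heq2]
    exact (D * γ).isUnit
  · intro h a b hab
    have hp : cyc ![(1 : R), 0] ∈ ProjLine R := by
      refine ⟨1, ?_⟩
      have h1 : Matrix.vecMul ![(1:R), 0] (1 : (Matrix (Fin 2) (Fin 2) R)ˣ).val = ![1, 0] := by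
        simp [Units.val_one, Matrix.vecMul_one]
      rw [h1]
    have heq : cyc ![(1 : R), 0] = cyc ![b, 0] := by
      apply le_antisymm
      · rw [cyc, Submodule.span_singleton_le_iff_mem]
        refine (mem_cyc' _ _).2 ⟨a, ?_⟩
        funext j; fin_cases j <;> simp [hab]
      · rw [cyc, Submodule.span_singleton_le_iff_mem]
        refine (mem_cyc' _ _).2 ⟨b, ?_⟩
        funext j; fin_cases j <;> simp
    obtain ⟨c, d, hu⟩ := h _ hp b 0 heq
    obtain ⟨u, hu⟩ := hu
    have hmi : u.val * (u⁻¹).val = 1 := u.mul_inv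
    rw [hu] at hmi
    have h00 : b * (u⁻¹).val 0 0 = 1 := by
      have := congrFun (congrFun hmi 0) 0
      rw [Matrix.mul_apply, Fin.sum_univ_two] at this
      simp only [Matrix.of_apply, Matrix.cons_val', Matrix.cons_val_zero, Matrix.cons_val_one,
        Matrix.head_cons, Matrix.empty_val', Matrix.cons_val_fin_one, Matrix.head_fin_const,
        Matrix.one_apply_eq, zero_mul, add_zero] at this
      exact this
    have ha : a = (u⁻¹).val 0 0 := by
      rw [← one_mul ((u⁻¹).val 0 0), ← hab, mul_assoc, h00, mul_one]
    rw [ha]; exact h00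
end

section
/- A ring R is Dedekind-finite if and only if no point of the projective line P(R) is properly contained in another point of P(R). -/
open Matrix

private lemma row0_vecMul {R : Type*} [Ring R] (A : Matrix (Fin 2) (Fin 2) R) :
    Matrix.vecMul ![1, 0] A = A 0 := by
  funext j; simp [Matrix.vecMul, dotProduct, Fin.sum_univ_two]

private lemma entry_lemma {R : Type*} [Ring R] (A B : Matrix (Fin 2) (Fin 2) R) (r : R)
    (hA : A 0 = r • ![1, 0]) (h : A * B = 1) : r * B 0 0 = 1 := by
  have h00 := congrArg (fun X => X 0 0) h
  simp only [Matrix.mul_apply, Fin.sum_univ_two, Matrix.one_apply_eq, hA] at h00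
  simpa using h00

theorem stmt6 {R : Type*} [Ring R] :
    (∀ a b : R, a * b = 1 → b * a = 1) ↔
      ∀ p ∈ ProjLine R, ∀ q ∈ ProjLine R, ¬ p < q := by
  constructor
  · rintro hDF p ⟨γ, rfl⟩ q ⟨δ, rfl⟩ hlt
    set v := Matrix.vecMul ![1, 0] γ.val with hv
    set w := Matrix.vecMul ![1, 0] δ.val with hw
    have hvmem : v ∈ cyc w := hlt.le (Submodule.mem_span_singleton_self v)
    obtain ⟨r, hr⟩ := Submodule.mem_span_singleton.mp hvmem
    set M : (Matrix (Fin 2) (Fin 2) R)ˣ := γ * δ⁻¹ with hM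
    have hrow : M.val 0 = r • ![1, 0] := by
      have h1 : Matrix.vecMul ![1, 0] M.val = Matrix.vecMul v (δ⁻¹).val := by
        rw [hM, Units.val_mul, ← Matrix.vecMul_vecMul, hv]
      have h2 : Matrix.vecMul v (δ⁻¹).val = r • Matrix.vecMul w (δ⁻¹).val := by
        rw [← hr, Matrix.smul_vecMul]
      have h3 : Matrix.vecMul w (δ⁻¹).val = ![1, 0] := by
        rw [hw, Matrix.vecMul_vecMul, ← Units.val_mul, mul_inv_cancel, Units.val_one,
          Matrix.vecMul_one]
      rw [← row0_vecMul M.val, h1, h2, h3]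
    have hMN : M.val * (M⁻¹).val = 1 := by
      rw [← Units.val_mul, mul_inv_cancel, Units.val_one]
    have hentry : r * (M⁻¹).val 0 0 = 1 := entry_lemma _ _ _ hrow hMN
    have hinv : (M⁻¹).val 0 0 * r = 1 := hDF _ _ hentry
    have hwmem : w ∈ cyc v := by
      have hsm : (M⁻¹).val 0 0 • v = w := by
        rw [← hr, smul_smul, hinv, one_smul]
      rw [← hsm]
      exact Submodule.smul_mem _ _ (Submodule.mem_span_singleton_self v)
    exact hlt.not_ge (Submodule.span_le.mpr (Set.singleton_subset_iff.mpr hwmem))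
  · intro h a b hab
    have e1 : a * (1 - b * a) = 0 := by
      rw [mul_sub, mul_one, ← mul_assoc, hab, one_mul, sub_self]
    have e2 : (1 - b * a) * b = 0 := by
      rw [sub_mul, one_mul, mul_assoc, hab, mul_one, sub_self]
    have ee : (b * a) * (b * a) = b * a := by
      rw [mul_assoc, ← mul_assoc a b a, hab, one_mul]
    have e3 : (1 - b * a) * (1 - b * a) = 1 - b * a := by
      rw [sub_mul, one_mul, mul_sub, mul_one, ee, sub_self, sub_zero]
    have key1 : Matrix.of ![![a, (0:R)], ![1 - b*a, b]] *
        Matrix.of ![![b, 1 - b*a], ![0, a]] = 1 := by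
      ext i j
      fin_cases i <;> fin_cases j <;>
        simp [Matrix.mul_apply, Fin.sum_univ_two, Matrix.one_apply, hab, e1, e2, e3]
    have key2 : Matrix.of ![![b, 1 - b*a], ![0, a]] *
        Matrix.of ![![a, (0:R)], ![1 - b*a, b]] = 1 := by
      ext i j
      fin_cases i <;> fin_cases j <;>
        simp [Matrix.mul_apply, Fin.sum_univ_two, Matrix.one_apply, hab, e1, e2, e3]
    let M : (Matrix (Fin 2) (Fin 2) R)ˣ :=
      ⟨Matrix.of ![![a, 0], ![1 - b*a, b]], Matrix.of ![![b, 1 - b*a], ![0, a]], key1, key2⟩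
    have hp : cyc ![a, (0:R)] ∈ ProjLine R := by
      refine ⟨M, ?_⟩
      rw [row0_vecMul]
      rfl
    have hq : cyc ![(1:R), 0] ∈ ProjLine R := by
      refine ⟨1, ?_⟩
      rw [Units.val_one, Matrix.vecMul_one]
    have hle : cyc ![a, (0:R)] ≤ cyc ![(1:R), 0] := by
      apply Submodule.span_le.mpr
      rw [Set.singleton_subset_iff]
      have hsm : a • ![(1:R), 0] = ![a, 0] := by
        funext i; fin_cases i <;> simp
      rw [← hsm]
      exact Submodule.smul_mem _ _ (Submodule.mem_span_singleton_self _)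
    have heq : cyc ![a, (0:R)] = cyc ![(1:R), 0] :=
      (lt_or_eq_of_le hle).resolve_left (h _ hp _ hq)
    have hmem : ![(1:R), 0] ∈ cyc ![a, (0:R)] := by
      rw [heq]; exact Submodule.mem_span_singleton_self _
    obtain ⟨r, hr⟩ := Submodule.mem_span_singleton.mp hmem
    have hra : r * a = 1 := by
      have := congrFun hr 0
      simpa using this
    have hrb : r = b := by
      calc r = r * (a * b) := by rw [hab, mul_one]
        _ = (r * a) * b := by rw [mul_assoc]
        _ = b := by rw [hra, one_mul]
    rw [← hrb]; exact hra
end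

section
/- If R is not Dedekind-finite, then there exists a strictly increasing infinite chain p₀ ⊊ p₁ ⊊ p₂ ⊊ ⋯ of points of the projective line P(R). -/
open Matrix

lemma auxUnit_mul {R : Type*} [Ring R] (x y : R) (hyx : y * x = 1) :
    (Matrix.of ![![x, 1 - x*y], ![1, y]]) * (Matrix.of ![![y, 0], ![1 - 2*(x*y), x]]) = 1 ∧
    (Matrix.of ![![y, 0], ![1 - 2*(x*y), x]]) * (Matrix.of ![![x, 1 - x*y], ![1, y]]) = 1 := by
  have h1 : ∀ c : R, y * (x * c) = c := fun c => by rw [← mul_assoc, hyx, one_mul]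
  constructor <;>
  · ext i j
    fin_cases i <;> fin_cases j <;>
      simp [Matrix.mul_apply, Fin.sum_univ_two, mul_sub, sub_mul, mul_assoc, hyx, h1] <;>
      noncomm_ring <;> simp [h1]

/-- Auxiliary unit matrix: if `y*x = 1` then `!![x, 1-x*y; 1, y]` is invertible. -/
def auxUnit {R : Type*} [Ring R] (x y : R) (hyx : y * x = 1) :
    (Matrix (Fin 2) (Fin 2) R)ˣ where
  val := Matrix.of ![![x, 1 - x*y], ![1, y]]
  inv := Matrix.of ![![y, 0], ![1 - 2*(x*y), x]]
  val_inv := (auxUnit_mul x y hyx).1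
  inv_val := (auxUnit_mul x y hyx).2

lemma row0 {R : Type*} [Ring R] (M : Matrix (Fin 2) (Fin 2) R) :
    Matrix.vecMul ![(1 : R), 0] M = M 0 := by
  funext j
  simp [Matrix.vecMul, dotProduct, Fin.sum_univ_two]

theorem stmt7 {R : Type*} [Ring R] (h : ¬ ∀ a b : R, a * b = 1 → b * a = 1) :
    ∃ p : ℕ → Submodule R (Fin 2 → R),
      (∀ n, p n ∈ ProjLine R) ∧ ∀ n, p n < p (n + 1) := by
  push_neg at h
  obtain ⟨a, b, hab, hba⟩ := h
  -- powers cancel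
  have han : ∀ n : ℕ, a ^ n * b ^ n = 1 := by
    intro n
    induction n with
    | zero => simp
    | succ n ih =>
      rw [pow_succ, pow_succ']
      calc a ^ n * a * (b * b ^ n) = a ^ n * (a * b) * b ^ n := by noncomm_ring
        _ = 1 := by rw [hab, mul_one, ih]
  set v : ℕ → Fin 2 → R := fun n => ![b ^ n, 1 - b ^ n * a ^ n] with hv
  refine ⟨fun n => cyc (v n), fun n => ?_, fun n => ?_⟩
  · -- membership in ProjLine
    refine ⟨auxUnit (b ^ n) (a ^ n) (han n), ?_⟩
    rw [row0]
    rfl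
  · -- strict inclusion
    have hle : cyc (v n) ≤ cyc (v (n + 1)) := by
      rw [cyc, Submodule.span_le, Set.singleton_subset_iff, SetLike.mem_coe, cyc,
        Submodule.mem_span_singleton]
      refine ⟨b ^ n * a ^ (n+1) + 1 - b ^ n * a ^ n, ?_⟩
      funext j
      have e1 : (b ^ n * a ^ (n+1) + 1 - b ^ n * a ^ n) * b ^ (n+1) = b ^ n := by
        have t1 : a ^ (n+1) * b ^ (n+1) = 1 := han (n+1)
        have t2 : a ^ n * b ^ (n+1) = b := by
          rw [pow_succ b, ← mul_assoc, han n, one_mul]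
        calc (b ^ n * a ^ (n+1) + 1 - b ^ n * a ^ n) * b ^ (n+1)
            = b ^ n * (a ^ (n+1) * b ^ (n+1)) + b ^ (n+1) - b ^ n * (a ^ n * b ^ (n+1)) := by
              noncomm_ring
          _ = b ^ n := by rw [t1, t2, mul_one, ← pow_succ b]; abel
      have e2 : (b ^ n * a ^ (n+1) + 1 - b ^ n * a ^ n) * (1 - b ^ (n+1) * a ^ (n+1))
          = 1 - b ^ n * a ^ n := by
        have t1 : a ^ (n+1) * b ^ (n+1) = 1 := han (n+1)
        have t2 : a ^ n * b ^ (n+1) = b := by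
          rw [pow_succ b, ← mul_assoc, han n, one_mul]
        calc (b ^ n * a ^ (n+1) + 1 - b ^ n * a ^ n) * (1 - b ^ (n+1) * a ^ (n+1))
            = b ^ n * a ^ (n+1) + 1 - b ^ n * a ^ n
              - (b ^ n * ((a ^ (n+1) * b ^ (n+1)) * a ^ (n+1)) + b ^ (n+1) * a ^ (n+1)
                - b ^ n * ((a ^ n * b ^ (n+1)) * a ^ (n+1))) := by noncomm_ring
          _ = 1 - b ^ n * a ^ n := by
              rw [t1, t2, one_mul]
              have : b ^ n * (b * a ^ (n+1)) = b ^ (n+1) * a ^ (n+1) := by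
                rw [← mul_assoc, ← pow_succ b]
              rw [this]; abel
      fin_cases j <;> simp [hv, e1, e2]
    refine lt_of_le_of_ne hle (fun heq => ?_)
    have hmem : v (n+1) ∈ cyc (v n) := by
      simp only at heq
      rw [heq, cyc]; exact Submodule.mem_span_singleton_self _
    rw [cyc, Submodule.mem_span_singleton] at hmem
    obtain ⟨s, hs⟩ := hmem
    have hs0 : s * b ^ n = b ^ (n+1) := by
      have := congrFun hs 0; simpa [hv] using this
    have hs1 : s * (1 - b ^ n * a ^ n) = 1 - b ^ (n+1) * a ^ (n+1) := by
      have := congrFun hs 1; simpa [hv] using this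
    -- s = b^{n+1} a^n + 1 - b^{n+1} a^{n+1}
    have hseq : s = b ^ (n+1) * a ^ n + (1 - b ^ (n+1) * a ^ (n+1)) := by
      have : s * (b ^ n * a ^ n) + s * (1 - b ^ n * a ^ n) = s := by noncomm_ring
      rw [← this, ← mul_assoc, hs0, hs1]
    -- plug back into hs0
    have hkey : b ^ n = b ^ (n+1) * a := by
      have t2 : a ^ (n+1) * b ^ n = a := by
        rw [pow_succ' a, mul_assoc, han n, mul_one]
      have expand : (b ^ (n+1) * a ^ n + (1 - b ^ (n+1) * a ^ (n+1))) * b ^ n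
          = b ^ (n+1) * (a ^ n * b ^ n) + b ^ n - b ^ (n+1) * (a ^ (n+1) * b ^ n) := by
        noncomm_ring
      have : b ^ (n+1) * (a ^ n * b ^ n) + b ^ n - b ^ (n+1) * (a ^ (n+1) * b ^ n)
          = b ^ (n+1) := by rw [← expand, ← hseq, hs0]
      rw [han n, t2, mul_one] at this
      linear_combination (norm := noncomm_ring) this
    apply hba
    have : a ^ n * b ^ n = a ^ n * (b ^ (n+1) * a) := by rw [← hkey]
    rw [han n, pow_succ b, ← mul_assoc, ← mul_assoc, han n, one_mul] at this
    exact this.symm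
end

section
/- If R has stable rank 2 (i.e., for every unimodular pair (a,b) there exists c ∈ R such that a + b·c has a right inverse), then R is Dedekind-finite. -/
open Matrix

theorem stmt8 {R : Type*} [Ring R]
    (h : ∀ a b : R, (∃ x y : R, a * x + b * y = 1) → ∃ c r : R, (a + b * c) * r = 1) :
    ∀ a b : R, a * b = 1 → b * a = 1 := by
  intro a b hab
  obtain ⟨c, r, hcr⟩ := h b (1 - b * a) ⟨a, 1, by noncomm_ring⟩
  set u := b + (1 - b * a) * c with hu
  have hau : a * u = 1 := by
    have h1 : a * u = a * b + (a - (a * b) * a) * c := by rw [hu]; noncomm_ring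
    rw [h1, hab]; noncomm_ring
  have hua : u * a = 1 := by
    calc u * a = u * a * (u * r) := by rw [hcr, mul_one]
    _ = u * (a * u) * r := by noncomm_ring
    _ = u * r := by rw [hau, mul_one]
    _ = 1 := hcr
  have hb : b = u := by
    calc b = (u * a) * b := by rw [hua, one_mul]
    _ = u * (a * b) := by rw [mul_assoc]
    _ = u := by rw [hab, mul_one]
  rw [hb]; exact hua
end

section
/- Two points p, q of the projective line P(R) are distant if and only if p and q are complementary submodules of R², i.e., p ⊕ q = R². -/
open Matrix

lemma vecMul_pair {R : Type*} [Ring R] (a b : R) (M : Matrix (Fin 2) (Fin 2) R) :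
    Matrix.vecMul ![a, b] M = a • M 0 + b • M 1 := by
  funext j
  simp [Matrix.vecMul, dotProduct, Fin.sum_univ_two]

lemma vecMul_inj {R : Type*} [Ring R] (γ : (Matrix (Fin 2) (Fin 2) R)ˣ) {w : Fin 2 → R}
    (h : Matrix.vecMul w γ.val = 0) : w = 0 := by
  have h2 : Matrix.vecMul (Matrix.vecMul w γ.val) (γ⁻¹).val
      = Matrix.vecMul (0 : Fin 2 → R) (γ⁻¹).val := by rw [h]
  rwa [Matrix.vecMul_vecMul, Units.mul_inv, Matrix.vecMul_one, Matrix.zero_vecMul] at h2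

lemma pair_eq {R : Type*} [Ring R] (w : Fin 2 → R) : w = ![w 0, w 1] := by
  funext j; fin_cases j <;> rfl

lemma smul_e0 {R : Type*} [Ring R] (x : R) : x • (![1, 0] : Fin 2 → R) = ![x, 0] := by
  funext j; fin_cases j <;> simp

lemma smul_e1 {R : Type*} [Ring R] (x : R) : x • (![0, 1] : Fin 2 → R) = ![0, x] := by
  funext j; fin_cases j <;> simp

lemma row_mul {R : Type*} [Ring R] (A B : Matrix (Fin 2) (Fin 2) R) (i : Fin 2) :
    (A * B) i = Matrix.vecMul (A i) B := by
  funext j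
  simp [Matrix.mul_apply, Matrix.vecMul, dotProduct]

lemma one_row0 {R : Type*} [Ring R] :
    (1 : Matrix (Fin 2) (Fin 2) R) 0 = ![1, 0] := by
  funext j; fin_cases j <;> simp [Matrix.one_apply]

lemma one_row1 {R : Type*} [Ring R] :
    (1 : Matrix (Fin 2) (Fin 2) R) 1 = ![0, 1] := by
  funext j; fin_cases j <;> simp [Matrix.one_apply]

lemma distant_isCompl_aux {R : Type*} [Ring R] (γ : (Matrix (Fin 2) (Fin 2) R)ˣ) :
    IsCompl (cyc (Matrix.vecMul ![1, 0] γ.val)) (cyc (Matrix.vecMul ![0, 1] γ.val)) := by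
  set u := Matrix.vecMul ![1, 0] γ.val with hu
  set v := Matrix.vecMul ![0, 1] γ.val with hv
  constructor
  · rw [disjoint_iff]
    rw [Submodule.eq_bot_iff]
    intro a ha
    rw [Submodule.mem_inf] at ha
    obtain ⟨ha1, ha2⟩ := ha
    rw [cyc, Submodule.mem_span_singleton] at ha1 ha2
    obtain ⟨x, hx⟩ := ha1
    obtain ⟨y, hy⟩ := ha2
    have h0 : Matrix.vecMul (![x, 0] - ![0, y]) γ.val = 0 := by
      rw [Matrix.sub_vecMul, ← smul_e0, ← smul_e1, ← smul_vecMul', ← smul_vecMul',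
        ← hu, ← hv, hx, hy, sub_self]
    have h1 := vecMul_inj γ h0
    have hx0 : x = 0 := by
      have := congrFun h1 0
      simpa using this
    rw [← hx, hx0, zero_smul]
  · rw [codisjoint_iff_le_sup]
    intro w _
    set z := Matrix.vecMul w (γ⁻¹).val with hz
    have hw : w = z 0 • u + z 1 • v := by
      rw [hu, hv, smul_vecMul', smul_vecMul', smul_e0, smul_e1, ← Matrix.add_vecMul]
      have h2 : (![z 0, 0] + ![0, z 1] : Fin 2 → R) = z := by
        funext j; fin_cases j <;> simp
      rw [h2, hz, Matrix.vecMul_vecMul, Units.inv_mul, Matrix.vecMul_one]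
    rw [hw]
    exact Submodule.add_mem_sup
      (Submodule.smul_mem _ _ (Submodule.mem_span_singleton_self u))
      (Submodule.smul_mem _ _ (Submodule.mem_span_singleton_self v))

lemma compl_distant_aux {R : Type*} [Ring R] (p q : Submodule R (Fin 2 → R))
    (α β : (Matrix (Fin 2) (Fin 2) R)ˣ)
    (hpα : p = cyc (Matrix.vecMul ![1, 0] α.val))
    (hqβ : q = cyc (Matrix.vecMul ![1, 0] β.val))
    (hc : IsCompl p q) :
    ∃ γ : (Matrix (Fin 2) (Fin 2) R)ˣ,
      p = cyc (Matrix.vecMul ![1, 0] γ.val) ∧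
      q = cyc (Matrix.vecMul ![0, 1] γ.val) := by
  set u := Matrix.vecMul ![1, 0] α.val with hu
  set v := Matrix.vecMul ![1, 0] β.val with hv
  set M : Matrix (Fin 2) (Fin 2) R := Matrix.of ![u, v] with hM
  have hM0 : M 0 = u := rfl
  have hM1 : M 1 = v := rfl
  -- key injectivity
  have hkey : ∀ x y : R, x • u + y • v = 0 → x = 0 ∧ y = 0 := by
    intro x y h
    have hxu : x • u ∈ p := hpα ▸ Submodule.smul_mem _ _ (Submodule.mem_span_singleton_self u)
    have hyv : x • u ∈ q := by
      have : x • u = (-y) • v := by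
        have h2 := eq_neg_of_add_eq_zero_left h
        rwa [← neg_smul] at h2
      rw [this, hqβ]
      exact Submodule.smul_mem _ _ (Submodule.mem_span_singleton_self v)
    have hbot : x • u = 0 := by
      have := hc.disjoint.le_bot (Submodule.mem_inf.mpr ⟨hxu, hyv⟩)
      simpa using this
    have hyv0 : y • v = 0 := by
      have := h
      rw [hbot, zero_add] at this
      exact this
    constructor
    · have : Matrix.vecMul ![x, 0] α.val = 0 := by
        rw [← smul_e0, ← smul_vecMul', ← hu, hbot]
      have h1 := vecMul_inj α this
      simpa using congrFun h1 0
    · have : Matrix.vecMul ![y, 0] β.val = 0 := by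
        rw [← smul_e0, ← smul_vecMul', ← hv, hyv0]
      have h1 := vecMul_inj β this
      simpa using congrFun h1 0
  have hvecM : ∀ x y : R, Matrix.vecMul ![x, y] M = x • u + y • v := by
    intro x y
    rw [vecMul_pair, hM0, hM1]
  -- surjectivity
  have hsurj : ∀ w : Fin 2 → R, ∃ x y : R, x • u + y • v = w := by
    intro w
    have hw : w ∈ p ⊔ q := by
      rw [hc.codisjoint.eq_top]; trivial
    obtain ⟨a, ha, b, hb, hab⟩ := Submodule.mem_sup.mp hw
    rw [hpα, cyc, Submodule.mem_span_singleton] at ha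
    rw [hqβ, cyc, Submodule.mem_span_singleton] at hb
    obtain ⟨x, hx⟩ := ha
    obtain ⟨y, hy⟩ := hb
    exact ⟨x, y, by rw [hx, hy, hab]⟩
  obtain ⟨x0, y0, h0⟩ := hsurj ![1, 0]
  obtain ⟨x1, y1, h1⟩ := hsurj ![0, 1]
  set N : Matrix (Fin 2) (Fin 2) R := Matrix.of ![![x0, y0], ![x1, y1]] with hN
  have hNM : N * M = 1 := by
    funext i j
    fin_cases i
    · have : (N * M) 0 = (1 : Matrix (Fin 2) (Fin 2) R) 0 := by
        rw [row_mul, one_row0]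
        show Matrix.vecMul ![x0, y0] M = _
        rw [hvecM, h0]
      exact congrFun this j
    · have : (N * M) 1 = (1 : Matrix (Fin 2) (Fin 2) R) 1 := by
        rw [row_mul, one_row1]
        show Matrix.vecMul ![x1, y1] M = _
        rw [hvecM, h1]
      exact congrFun this j
  have hinjM : ∀ w : Fin 2 → R, Matrix.vecMul w M = 0 → w = 0 := by
    intro w hw
    have hw' : Matrix.vecMul ![w 0, w 1] M = 0 := by rw [← pair_eq w]; exact hw
    rw [hvecM] at hw'
    obtain ⟨h00, h11⟩ := hkey _ _ hw'
    funext j; fin_cases j <;> simp [h00, h11]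
  have hfix : ∀ w : Fin 2 → R, Matrix.vecMul w (M * N) = w := by
    intro w
    have e1 : Matrix.vecMul (Matrix.vecMul w (M * N)) M = Matrix.vecMul w M := by
      rw [Matrix.vecMul_vecMul, mul_assoc, hNM, mul_one]
    have e2 : Matrix.vecMul (Matrix.vecMul w (M * N) - w) M = 0 := by
      rw [Matrix.sub_vecMul, e1, sub_self]
    have := hinjM _ e2
    rwa [sub_eq_zero] at this
  have hMN : M * N = 1 := by
    funext i j
    have : (M * N) i = (1 : Matrix (Fin 2) (Fin 2) R) i := by
      rw [← one_mul (M * N), row_mul]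
      exact hfix _
    exact congrFun this j
  refine ⟨⟨M, N, hMN, hNM⟩, ?_, ?_⟩
  · rw [hpα]
    congr 1
    show u = Matrix.vecMul ![1, 0] M
    rw [hvecM, one_smul, zero_smul, add_zero]
  · rw [hqβ]
    congr 1
    show v = Matrix.vecMul ![0, 1] M
    rw [vecMul_pair, hM0, hM1, one_smul, zero_smul, zero_add]

theorem stmt12 {R : Type*} [Ring R] (p q : Submodule R (Fin 2 → R))
    (hp : p ∈ ProjLine R) (hq : q ∈ ProjLine R) :
    Distant p q ↔ IsCompl p q := by
  constructor
  · rintro ⟨γ, hp', hq'⟩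
    rw [hp', hq']
    exact distant_isCompl_aux γ
  · intro hc
    obtain ⟨α, hpα⟩ := hp
    obtain ⟨β, hqβ⟩ := hq
    exact compl_distant_aux p q α β hpα hqβ hc
end

section
/- Let φ: R → S be a unital ring homomorphism. The induced map φ̄: P(R) → P(S) on projective lines is injective if and only if φ is injective. -/
open Matrix

theorem stmt14 {R S : Type*} [Ring R] [Ring S] (φ : R →+* S) :
    Function.Injective φ ↔
      ∀ a b c d : R, Admissible a b → Admissible c d →
        cyc ![φ a, φ b] = cyc ![φ c, φ d] → cyc ![a, b] = cyc ![c, d] := by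
  constructor
  · intro hφ a b c d hab hcd h
    have key : ∀ a b c d : R, Admissible a b →
        (![φ c, φ d] ∈ cyc ![φ a, φ b]) → ![c, d] ∈ cyc ![a, b] := by
      intro a b c d hab hmem
      obtain ⟨c', d', hM⟩ := hab
      have hM' : IsUnit (Matrix.of ![![a, b], ![c', d']] : Matrix (Fin 2) (Fin 2) R) := hM
      obtain ⟨γ, hγ⟩ := hM'
      obtain ⟨t, ht⟩ := (Submodule.mem_span_singleton).mp hmem
      set w : Fin 2 → R := Matrix.vecMul ![c, d] (γ⁻¹.val) with hw
      have hwγ : Matrix.vecMul w γ.val = ![c, d] := by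
        rw [hw, Matrix.vecMul_vecMul, Units.inv_mul, Matrix.vecMul_one]
      have hrow : ∀ j, γ.val 0 j = ![a, b] j := by
        intro j; rw [hγ]; fin_cases j <;> rfl
      -- map downstairs
      have hdown : ∀ j, φ (w 0) * φ (γ.val 0 j)
          + φ (w 1) * φ (γ.val 1 j)
          = t * φ (γ.val 0 j) := by
        intro j
        have h1 : φ (Matrix.vecMul w γ.val j) = φ (![c, d] j) := by rw [hwγ]
        have h2 : φ (![c, d] j) = t * ![φ a, φ b] j := by
          have := congr_fun ht j
          simp only [Pi.smul_apply, smul_eq_mul] at this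
          rw [this]
          fin_cases j <;> rfl
        have h3 : ![φ a, φ b] j = φ (γ.val 0 j) := by
          rw [hrow j]
          fin_cases j <;> rfl
        rw [Matrix.vecMul, dotProduct, Fin.sum_univ_two] at h1
        simp only [map_add, _root_.map_mul] at h1
        rw [h1, h2, h3]
      -- injectivity of right multiplication by the mapped unit
      set ψ : (Matrix (Fin 2) (Fin 2) S)ˣ :=
        Units.map (RingHom.mapMatrix φ).toMonoidHom γ with hψ
      have hψval : ∀ i j, ψ.val i j = φ (γ.val i j) := fun i j => rfl
      have hvecmul : Matrix.vecMul (fun i => φ (w i)) ψ.val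
          = Matrix.vecMul ![t, 0] ψ.val := by
        funext j
        rw [Matrix.vecMul, Matrix.vecMul, dotProduct, dotProduct,
          Fin.sum_univ_two, Fin.sum_univ_two]
        simp only [hψval]
        simpa using hdown j
      have hweq : (fun i => φ (w i)) = ![t, 0] := by
        have h := congr_arg (fun v => Matrix.vecMul v ψ⁻¹.val) hvecmul
        simpa only [Matrix.vecMul_vecMul, Units.mul_inv, Matrix.vecMul_one] using h
      have hw1 : w 1 = 0 := by
        apply hφ
        have := congr_fun hweq 1
        simpa using this
      refine (Submodule.mem_span_singleton).mpr ⟨w 0, ?_⟩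
      funext j
      have hj := congr_fun hwγ j
      rw [Matrix.vecMul, dotProduct, Fin.sum_univ_two] at hj
      rw [hw1, zero_mul, add_zero, hrow j] at hj
      simpa [Pi.smul_apply, smul_eq_mul] using hj
    apply le_antisymm
    · rw [cyc, Submodule.span_le, Set.singleton_subset_iff]
      exact key c d a b hcd (h ▸ Submodule.mem_span_singleton_self _)
    · rw [cyc, Submodule.span_le, Set.singleton_subset_iff]
      exact key a b c d hab (h.symm ▸ Submodule.mem_span_singleton_self _)
  · intro H x y hxy
    have adm : ∀ z : R, Admissible 1 z := by
      intro z
      refine ⟨0, 1, ?_⟩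
      refine ⟨⟨Matrix.of ![![1, z], ![0, 1]], Matrix.of ![![1, -z], ![0, 1]], ?_, ?_⟩, rfl⟩ <;>
        · ext i j
          fin_cases i <;> fin_cases j <;>
            simp [Matrix.mul_apply, Fin.sum_univ_two]
    have h1 : cyc ![φ 1, φ x] = cyc ![φ 1, φ y] := by rw [hxy]
    have h2 := H 1 x 1 y (adm x) (adm y) h1
    have hmem : ![(1 : R), x] ∈ cyc ![(1 : R), y] :=
      h2 ▸ Submodule.mem_span_singleton_self _
    obtain ⟨r, hr⟩ := (Submodule.mem_span_singleton).mp hmem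
    have hr0 := congr_fun hr 0
    have hr1 := congr_fun hr 1
    simp only [Pi.smul_apply, smul_eq_mul] at hr0 hr1
    simp only [Matrix.cons_val_zero, Matrix.cons_val_one, Matrix.head_cons, mul_one] at hr0 hr1
    rw [hr0, one_mul] at hr1
    exact hr1.symm
end

section
/- Let φ: R → S be a unital ring homomorphism and φ̄: P(R) → P(S) the induced map. The following are equivalent: (1) for all p,q ∈ P(R), if p^φ̄ and q^φ̄ are distant then p and q are distant; (2) for all y ∈ R, if y^φ is invertible in S then y is invertible in R. -/
open Matrix

section Helpers

variable {T : Type*} [Ring T]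

lemma mul_entry' {P Q E : Matrix (Fin 2) (Fin 2) T} (h : P * Q = E) (i j : Fin 2) :
    P i 0 * Q 0 j + P i 1 * Q 1 j = E i j := by
  rw [← h]; simp [Matrix.mul_apply, Fin.sum_univ_two]

lemma vecMul_e0' (M : Matrix (Fin 2) (Fin 2) T) : Matrix.vecMul ![1, 0] M = M 0 := by
  funext j; simp [Matrix.vecMul, dotProduct, Fin.sum_univ_two]

lemma vecMul_e1' (M : Matrix (Fin 2) (Fin 2) T) : Matrix.vecMul ![0, 1] M = M 1 := by
  funext j; simp [Matrix.vecMul, dotProduct, Fin.sum_univ_two]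

lemma mem_cyc_of_eq' {v w : Fin 2 → T} (h : cyc v = cyc w) : ∃ r : T, r • w = v := by
  have : v ∈ cyc w := h ▸ Submodule.mem_span_singleton_self v
  exact Submodule.mem_span_singleton.mp this

lemma corner_unit' {P : Matrix (Fin 2) (Fin 2) T} (h : IsUnit P)
    (h00 : P 0 0 = 1) (h01 : P 0 1 = 0) : IsUnit (P 1 1) := by
  obtain ⟨u, rfl⟩ := h
  have h1 := mul_entry' u.mul_inv
  have h2 := mul_entry' u.inv_mul
  have e01 : (Units.val u⁻¹) 0 1 = 0 := by
    have t := h1 0 1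
    rw [h00, h01, one_mul, zero_mul, add_zero, Matrix.one_apply_ne (by decide)] at t
    exact t
  have left : (Units.val u⁻¹) 1 1 * u.val 1 1 = 1 := by
    have t := h2 1 1
    rw [h01, mul_zero, zero_add, Matrix.one_apply_eq] at t
    exact t
  have right : u.val 1 1 * (Units.val u⁻¹) 1 1 = 1 := by
    have t := h1 1 1
    rw [e01, mul_zero, zero_add, Matrix.one_apply_eq] at t
    exact t
  exact ⟨⟨u.val 1 1, (Units.val u⁻¹) 1 1, right, left⟩, rfl⟩

lemma unimod' {a b : T} (h : Admissible a b) : ∃ p q : T, a * p + b * q = 1 := by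
  obtain ⟨c, d, hu⟩ := h
  obtain ⟨U, hU⟩ := hu
  have t := mul_entry' U.mul_inv 0 0
  rw [hU] at t
  refine ⟨Units.val U⁻¹ 0 0, Units.val U⁻¹ 1 0, ?_⟩
  simp only [Matrix.of_apply, Matrix.cons_val_zero, Matrix.cons_val_one, Matrix.head_cons,
    Matrix.one_apply_eq] at t
  exact t

lemma admissible_map' {R S : Type*} [Ring R] [Ring S] (φ : R →+* S) {a b : R}
    (h : Admissible a b) : Admissible (φ a) (φ b) := by
  obtain ⟨c, d, hu⟩ := h
  refine ⟨φ c, φ d, ?_⟩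
  have : Matrix.of ![![φ a, φ b], ![φ c, φ d]] = φ.mapMatrix (Matrix.of ![![a,b],![c,d]]) := by
    ext i j; fin_cases i <;> fin_cases j <;> simp
  rw [this]; exact hu.map φ.mapMatrix

/-- key: span equality with a unimodular vector gives a unit scalar relating
the generators -/
lemma scalar_of_cyc_eq' {v : Fin 2 → T} {Γ : (Matrix (Fin 2) (Fin 2) T)ˣ} {i : Fin 2}
    (h : cyc v = cyc (Γ.val i)) (hv : ∃ p q : T, v 0 * p + v 1 * q = 1) :
    ∃ r s : T, r * s = 1 ∧ s * r = 1 ∧ Γ.val i 0 = s * v 0 ∧ Γ.val i 1 = s * v 1 := by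
  obtain ⟨r, hr⟩ := mem_cyc_of_eq' h
  obtain ⟨s, hs⟩ := mem_cyc_of_eq' h.symm
  have hr0 : r * Γ.val i 0 = v 0 := by have := congrFun hr 0; simpa using this
  have hr1 : r * Γ.val i 1 = v 1 := by have := congrFun hr 1; simpa using this
  have hs0 : Γ.val i 0 = s * v 0 := by have := congrFun hs 0; simpa using this.symm
  have hs1 : Γ.val i 1 = s * v 1 := by have := congrFun hs 1; simpa using this.symm
  obtain ⟨p, q, hpq⟩ := hv
  have hrs : r * s = 1 := by
    have h0 : r * s * v 0 = v 0 := by rw [mul_assoc, ← hs0, hr0]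
    have h1 : r * s * v 1 = v 1 := by rw [mul_assoc, ← hs1, hr1]
    calc r * s = r * s * (v 0 * p + v 1 * q) := by rw [hpq, mul_one]
      _ = (r * s * v 0) * p + (r * s * v 1) * q := by
          rw [mul_add, ← mul_assoc, ← mul_assoc]
      _ = 1 := by rw [h0, h1, hpq]
  have hsr : s * r = 1 := by
    have t := mul_entry' Γ.mul_inv i i
    rw [Matrix.one_apply_eq] at t
    have h0 : s * r * Γ.val i 0 = Γ.val i 0 := by rw [mul_assoc, hr0, ← hs0]
    have h1 : s * r * Γ.val i 1 = Γ.val i 1 := by rw [mul_assoc, hr1, ← hs1]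
    calc s * r = s * r * (Γ.val i 0 * Units.val Γ⁻¹ 0 i + Γ.val i 1 * Units.val Γ⁻¹ 1 i) := by
          rw [t, mul_one]
      _ = (s * r * Γ.val i 0) * Units.val Γ⁻¹ 0 i
            + (s * r * Γ.val i 1) * Units.val Γ⁻¹ 1 i := by
          rw [mul_add, ← mul_assoc, ← mul_assoc]
      _ = 1 := by rw [h0, h1, t]
  exact ⟨r, s, hrs, hsr, hs0, hs1⟩

end Helpers

theorem stmt15 {R S : Type*} [Ring R] [Ring S] (φ : R →+* S) :
    (∀ a b c d : R, Admissible a b → Admissible c d →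
      Distant (cyc ![φ a, φ b]) (cyc ![φ c, φ d]) →
      Distant (cyc ![a, b]) (cyc ![c, d])) ↔
    (∀ y : R, IsUnit (φ y) → IsUnit y) := by
  constructor
  · -- distant-reflecting ⇒ unit-reflecting
    intro h y hy
    obtain ⟨u, hu⟩ := hy
    have adm1 : Admissible (1 : R) 0 := by
      refine ⟨0, 1, ?_⟩
      have : (Matrix.of ![![(1:R), 0], ![0, 1]]) = 1 := by
        ext i j; fin_cases i <;> fin_cases j <;> simp [Matrix.one_apply]
      rw [this]; exact isUnit_one
    have adm2 : Admissible (1 : R) y := by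
      refine ⟨0, 1, ?_⟩
      refine isUnit_iff_exists.mpr ⟨Matrix.of ![![1, -y], ![0, 1]], ?_, ?_⟩ <;>
        · ext i j
          fin_cases i <;> fin_cases j <;>
            simp [Matrix.mul_apply, Fin.sum_univ_two, Matrix.one_apply]
    have hGl : (Matrix.of ![![(1:S), 0], ![1, φ y]]) *
        (Matrix.of ![![1, 0], ![-(Units.val u⁻¹), Units.val u⁻¹]]) = 1 := by
      ext i j
      fin_cases i <;> fin_cases j <;>
        simp [Matrix.mul_apply, Fin.sum_univ_two, Matrix.one_apply, ← hu]
    have hGr : (Matrix.of ![![(1:S), 0], ![-(Units.val u⁻¹), Units.val u⁻¹]]) *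
        (Matrix.of ![![1, 0], ![1, φ y]]) = 1 := by
      ext i j
      fin_cases i <;> fin_cases j <;>
        simp [Matrix.mul_apply, Fin.sum_univ_two, Matrix.one_apply, ← hu]
    set Γu : (Matrix (Fin 2) (Fin 2) S)ˣ := ⟨_, _, hGl, hGr⟩ with hΓu
    have hdistS : Distant (cyc ![φ 1, φ 0]) (cyc ![φ 1, φ y]) := by
      refine ⟨Γu, congrArg cyc ?_, congrArg cyc ?_⟩
      · rw [show Γu.val = Matrix.of ![![(1:S), 0], ![1, φ y]] from rfl, vecMul_e0']
        funext j; fin_cases j <;> simp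
      · rw [show Γu.val = Matrix.of ![![(1:S), 0], ![1, φ y]] from rfl, vecMul_e1']
        funext j; fin_cases j <;> simp
    obtain ⟨γ, h1, h2⟩ := h 1 0 1 y adm1 adm2 hdistS
    rw [vecMul_e0'] at h1
    rw [vecMul_e1'] at h2
    obtain ⟨r, hr⟩ := mem_cyc_of_eq' h1
    obtain ⟨s, hs⟩ := mem_cyc_of_eq' h1.symm
    obtain ⟨r', hr'⟩ := mem_cyc_of_eq' h2
    obtain ⟨s', hs'⟩ := mem_cyc_of_eq' h2.symm
    have hr0 : r * γ.val 0 0 = 1 := by have := congrFun hr 0; simpa using this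
    have hs0 : γ.val 0 0 = s := by have := congrFun hs 0; simpa using this.symm
    have hs1 : γ.val 0 1 = 0 := by have := congrFun hs 1; simpa using this.symm
    have hr0' : r' * γ.val 1 0 = 1 := by have := congrFun hr' 0; simpa using this
    have hr1' : r' * γ.val 1 1 = y := by have := congrFun hr' 1; simpa using this
    have hs0' : γ.val 1 0 = s' := by have := congrFun hs' 0; simpa using this.symm
    have hs1' : γ.val 1 1 = s' * y := by have := congrFun hs' 1; simpa using this.symm
    have hmi := mul_entry' γ.mul_inv
    have him := mul_entry' γ.inv_mul
    have hrs : r * s = 1 := hs0 ▸ hr0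
    have hd01 : Units.val γ⁻¹ 0 1 = 0 := by
      have t := hmi 0 1
      rw [hs1, zero_mul, add_zero, hs0, Matrix.one_apply_ne (by decide)] at t
      calc Units.val γ⁻¹ 0 1 = r * (s * Units.val γ⁻¹ 0 1) := by
            rw [← mul_assoc, hrs, one_mul]
        _ = 0 := by rw [t, mul_zero]
    have hleft : Units.val γ⁻¹ 1 1 * (s' * y) = 1 := by
      have t := him 1 1
      rw [hs1, mul_zero, zero_add, hs1', Matrix.one_apply_eq] at t
      exact t
    have hright : (s' * y) * Units.val γ⁻¹ 1 1 = 1 := by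
      have t := hmi 1 1
      rw [hd01, mul_zero, zero_add, hs1', Matrix.one_apply_eq] at t
      exact t
    have hrs' : r' * s' = 1 := hs0' ▸ hr0'
    have hyy : y = r' * (s' * y) := by rw [← hs1', hr1']
    refine ⟨⟨y, Units.val γ⁻¹ 1 1 * s', ?_, ?_⟩, rfl⟩
    · calc y * (Units.val γ⁻¹ 1 1 * s')
          = (r' * (s' * y)) * (Units.val γ⁻¹ 1 1 * s') := by rw [← hyy]
        _ = r' * ((s' * y) * Units.val γ⁻¹ 1 1 * s') := by
            rw [mul_assoc r' (s' * y), mul_assoc (s' * y)]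
        _ = 1 := by rw [hright, one_mul, hrs']
    · calc Units.val γ⁻¹ 1 1 * s' * y
          = Units.val γ⁻¹ 1 1 * (s' * y) := by rw [mul_assoc]
        _ = 1 := hleft
  · -- unit-reflecting ⇒ distant-reflecting
    intro h a b c d hab hcd hD
    obtain ⟨Γ, hp, hq⟩ := hD
    rw [vecMul_e0'] at hp
    rw [vecMul_e1'] at hq
    obtain ⟨r, s, hrs, hsr, hG00, hG01⟩ :=
      scalar_of_cyc_eq' (v := ![φ a, φ b]) hp (by simpa using unimod' (admissible_map' φ hab))
    obtain ⟨r', s', hrs', hsr', hG10, hG11⟩ :=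
      scalar_of_cyc_eq' (v := ![φ c, φ d]) hq (by simpa using unimod' (admissible_map' φ hcd))
    simp only [Matrix.cons_val_zero, Matrix.cons_val_one, Matrix.head_cons] at hG00 hG01 hG10 hG11
    set φM : Matrix (Fin 2) (Fin 2) S := Matrix.of ![![φ a, φ b], ![φ c, φ d]] with hφM
    have hED : (Matrix.of ![![r, 0], ![0, r']]) * (Matrix.of ![![s, 0], ![0, s']])
        = (1 : Matrix (Fin 2) (Fin 2) S) := by
      ext i j
      fin_cases i <;> fin_cases j <;>
        simp [Matrix.mul_apply, Fin.sum_univ_two, Matrix.one_apply, hrs, hrs']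
    have hDE : (Matrix.of ![![s, 0], ![0, s']]) * (Matrix.of ![![r, 0], ![0, r']])
        = (1 : Matrix (Fin 2) (Fin 2) S) := by
      ext i j
      fin_cases i <;> fin_cases j <;>
        simp [Matrix.mul_apply, Fin.sum_univ_two, Matrix.one_apply, hsr, hsr']
    have hDM : (Matrix.of ![![s, 0], ![0, s']]) * φM = Γ.val := by
      ext i j
      fin_cases i <;> fin_cases j <;>
        simp [hφM, Matrix.mul_apply, Fin.sum_univ_two, hG00, hG01, hG10, hG11]
    have hφMunit : IsUnit φM := by
      have hEunit : IsUnit (Matrix.of ![![r, 0], ![0, r']] : Matrix (Fin 2) (Fin 2) S) :=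
        isUnit_iff_exists.mpr ⟨_, hED, hDE⟩
      have : (Matrix.of ![![r, 0], ![0, r']]) * Γ.val = φM := by
        rw [← hDM, ← mul_assoc, hED, one_mul]
      exact this ▸ hEunit.mul Γ.isUnit
    obtain ⟨a', b', hA⟩ := hab
    obtain ⟨A, hA'⟩ := hA
    set M : Matrix (Fin 2) (Fin 2) R := Matrix.of ![![a, b], ![c, d]] with hM
    set K : Matrix (Fin 2) (Fin 2) R := M * Units.val A⁻¹ with hK
    have hrow0 : M 0 0 = A.val 0 0 := by
      rw [hM, hA']
      simp only [Matrix.of_apply, Matrix.cons_val_zero]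
    have hrow1 : M 0 1 = A.val 0 1 := by
      rw [hM, hA']
      simp only [Matrix.of_apply, Matrix.cons_val_zero, Matrix.cons_val_one, Matrix.head_cons]
    have hK00 : K 0 0 = 1 := by
      have t := mul_entry' A.mul_inv 0 0
      rw [Matrix.one_apply_eq] at t
      rw [hK, Matrix.mul_apply, Fin.sum_univ_two, hrow0, hrow1]
      exact t
    have hK01 : K 0 1 = 0 := by
      have t := mul_entry' A.mul_inv 0 1
      rw [Matrix.one_apply_ne (by decide)] at t
      rw [hK, Matrix.mul_apply, Fin.sum_univ_two, hrow0, hrow1]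
      exact t
    have hφKunit : IsUnit (φ.mapMatrix K) := by
      rw [hK, _root_.map_mul]
      have h1 : φ.mapMatrix M = φM := by
        ext i j; fin_cases i <;> fin_cases j <;> simp [hM, hφM]
      have h2 : IsUnit (φ.mapMatrix (Units.val A⁻¹)) :=
        isUnit_iff_exists.mpr ⟨φ.mapMatrix A.val,
          by rw [← RingHom.map_mul, A.inv_mul, RingHom.map_one],
          by rw [← RingHom.map_mul, A.mul_inv, RingHom.map_one]⟩
      exact (h1 ▸ hφMunit).mul h2
    have hy : IsUnit (K 1 1) := by
      apply h
      have := corner_unit' hφKunit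
        (by simp only [RingHom.mapMatrix_apply, Matrix.map_apply, hK00, φ.map_one])
        (by simp only [RingHom.mapMatrix_apply, Matrix.map_apply, hK01, φ.map_zero])
      simpa only [RingHom.mapMatrix_apply, Matrix.map_apply] using this
    obtain ⟨v, hv⟩ := hy
    have hKunit : IsUnit K := by
      have hKeq : K = Matrix.of ![![1, 0], ![K 1 0, K 1 1]] := by
        ext i j
        fin_cases i <;> fin_cases j <;> simp [hK00, hK01]
      rw [hKeq]
      refine isUnit_iff_exists.mpr
        ⟨Matrix.of ![![1, 0], ![-(Units.val v⁻¹ * K 1 0), Units.val v⁻¹]], ?_, ?_⟩ <;>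
        · ext i j
          fin_cases i <;> fin_cases j <;>
            simp [Matrix.mul_apply, Fin.sum_univ_two, Matrix.one_apply, ← hv,
              mul_neg, neg_mul, ← mul_assoc]
    have hMunit : IsUnit M := by
      have : K * A.val = M := by
        rw [hK, mul_assoc, A.inv_mul, mul_one]
      exact this ▸ hKunit.mul A.isUnit
    obtain ⟨γM, hγM⟩ := hMunit
    refine ⟨γM, congrArg cyc ?_, congrArg cyc ?_⟩
    · rw [vecMul_e0', hγM, hM]; funext j; fin_cases j <;> simp
    · rw [vecMul_e1', hγM, hM]; funext j; fin_cases j <;> simp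
end

section
/- For a unital ring homomorphism φ: R → S, the condition that y^φ ∈ S^× implies y ∈ R^× for all y ∈ R is equivalent to: ker(φ) is contained in the Jacobson radical of R, and the units of the image ring R^φ are exactly S^× ∩ R^φ. -/
open Matrix

lemma isUnit_one_add_jac {R : Type*} [Ring R] (r : R)
    (h : r - 1 ∈ Ideal.jacobson (⊥ : Ideal R)) : IsUnit r := by
  obtain ⟨s, hs⟩ := Ideal.exists_mul_sub_mem_of_sub_one_mem_jacobson r h
  rw [Ideal.mem_bot, sub_eq_zero] at hs
  have hs1 : s - 1 ∈ Ideal.jacobson (⊥ : Ideal R) := by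
    have : s - 1 = -(s * (r - 1)) := by rw [mul_sub, mul_one, hs, neg_sub]
    rw [this]
    exact neg_mem (Ideal.mul_mem_left _ s h)
  obtain ⟨t, ht⟩ := Ideal.exists_mul_sub_mem_of_sub_one_mem_jacobson s hs1
  rw [Ideal.mem_bot, sub_eq_zero] at ht
  have htr : t = r := by
    calc t = t * (s * r) := by rw [hs, mul_one]
    _ = t * s * r := by rw [mul_assoc]
    _ = r := by rw [ht, one_mul]
  exact ⟨⟨r, s, by rw [← htr]; exact ht, hs⟩, rfl⟩

theorem stmt16 {R S : Type*} [Ring R] [Ring S] (φ : R →+* S) :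
    (∀ y : R, IsUnit (φ y) → IsUnit y) ↔
      (RingHom.ker φ ≤ Ideal.jacobson (⊥ : Ideal R)) ∧
      (∀ x : φ.range, IsUnit x ↔ IsUnit (x : S)) := by
  constructor
  · intro H
    refine ⟨?_, ?_⟩
    · intro x hx
      rw [RingHom.mem_ker] at hx
      rw [Ideal.jacobson]
      rw [Ideal.mem_sInf]
      rintro M ⟨-, hM⟩
      by_contra hxM
      obtain ⟨y, i, hi, df⟩ := hM.exists_inv hxM
      have : IsUnit (φ i) := by
        have : φ i = 1 := by
          have := congrArg φ df
          simpa [map_add, _root_.map_mul, hx, _root_.map_one] using this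
        rw [this]; exact isUnit_one
      exact hM.ne_top (Ideal.eq_top_of_isUnit_mem M hi (H i this))
    · intro x
      constructor
      · intro h
        exact h.map φ.range.subtype
      · intro h
        obtain ⟨y, hy⟩ := x.2
        have hy' : IsUnit (φ y) := by rw [hy]; exact h
        have : x = φ.rangeRestrict y := Subtype.ext hy.symm
        rw [this]
        exact (H y hy').map φ.rangeRestrict
  · rintro ⟨h1, h2⟩ y hy
    set x : φ.range := ⟨φ y, ⟨y, rfl⟩⟩ with hx
    have hux : IsUnit x := (h2 x).mpr hy
    obtain ⟨u, hu⟩ := hux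
    obtain ⟨z, hz⟩ := (↑u⁻¹ : φ.range).2
    have e1 : φ (y * z) = 1 := by
      rw [_root_.map_mul, hz]
      have : (↑(u * u⁻¹) : S) = φ y * ↑(u⁻¹ : φ.rangeˣ) := by
        rw [Units.val_mul, hu]; rfl
      rw [mul_inv_cancel] at this
      exact this.symm
    have e2 : φ (z * y) = 1 := by
      rw [_root_.map_mul, hz]
      have : (↑(u⁻¹ * u) : S) = ↑(u⁻¹ : φ.rangeˣ) * φ y := by
        rw [Units.val_mul, hu]; rfl
      rw [inv_mul_cancel] at this
      exact this.symm
    have j1 : IsUnit (y * z) := by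
      apply isUnit_one_add_jac
      apply h1
      rw [RingHom.mem_ker, map_sub, e1, _root_.map_one, sub_self]
    have j2 : IsUnit (z * y) := by
      apply isUnit_one_add_jac
      apply h1
      rw [RingHom.mem_ker, map_sub, e2, _root_.map_one, sub_self]
    obtain ⟨a, ha⟩ := j1
    obtain ⟨b, hb⟩ := j2
    have hr : y * (z * ↑a⁻¹) = 1 := by
      rw [← mul_assoc, ← ha, Units.mul_inv]
    have hl : (↑b⁻¹ * z) * y = 1 := by
      rw [mul_assoc, ← hb, Units.inv_mul]
    have : ↑b⁻¹ * z = z * ↑a⁻¹ := by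
      calc (↑b⁻¹ * z : R) = ↑b⁻¹ * z * (y * (z * ↑a⁻¹)) := by rw [hr, mul_one]
      _ = (↑b⁻¹ * z * y) * (z * ↑a⁻¹) := by noncomm_ring
      _ = z * ↑a⁻¹ := by rw [hl, one_mul]
    exact ⟨⟨y, z * ↑a⁻¹, hr, by rw [← this]; exact hl⟩, rfl⟩
end

section
/- Let φ: R → S be a surjective unital ring homomorphism and suppose S is a GE₂-ring. Then the induced map φ̄: P(R) → P(S) of projective lines is surjective. -/
open Matrix

/-- Elementary transvections in `GL₂(R)`. -/
def Transvections (R : Type*) [Ring R] : Set (Matrix (Fin 2) (Fin 2) R)ˣ :=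
  {γ | ∃ x : R, (γ.val) = Matrix.of ![![1, 0], ![x, 1]] ∨
        (γ.val) = Matrix.of ![![1, x], ![0, 1]]}

/-- Invertible diagonal matrices in `GL₂(R)`. -/
def Diagonals (R : Type*) [Ring R] : Set (Matrix (Fin 2) (Fin 2) R)ˣ :=
  {γ | ∃ a b : R, (γ.val) = Matrix.of ![![a, 0], ![0, b]]}


section Aux
variable {S : Type*} [Ring S]

/-- diagonal 2x2 matrix -/
def Dmat (u v : S) : Matrix (Fin 2) (Fin 2) S := Matrix.of ![![u, 0], ![0, v]]

lemma Dmat_mul_Dmat (u v u' v' : S) :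
    Dmat u v * Dmat u' v' = Dmat (u * u') (v * v') := by
  ext i j
  fin_cases i <;> fin_cases j <;>
    simp [Dmat, Matrix.mul_apply, Fin.sum_univ_two]

lemma Dmat_one : Dmat (1 : S) 1 = 1 := by
  ext i j
  fin_cases i <;> fin_cases j <;> simp [Dmat, Matrix.one_apply]

/-- diagonal unit -/
def Dunit (u v : Sˣ) : (Matrix (Fin 2) (Fin 2) S)ˣ where
  val := Dmat (u : S) (v : S)
  inv := Dmat ((u⁻¹ : Sˣ) : S) ((v⁻¹ : Sˣ) : S)
  val_inv := by rw [Dmat_mul_Dmat]; simp [Dmat_one]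
  inv_val := by rw [Dmat_mul_Dmat]; simp [Dmat_one]

/-- lower transvection unit -/
def TLu (x : S) : (Matrix (Fin 2) (Fin 2) S)ˣ where
  val := Matrix.of ![![1, 0], ![x, 1]]
  inv := Matrix.of ![![1, 0], ![-x, 1]]
  val_inv := by
    ext i j
    fin_cases i <;> fin_cases j <;>
      simp [Matrix.mul_apply, Matrix.one_apply, Fin.sum_univ_two]
  inv_val := by
    ext i j
    fin_cases i <;> fin_cases j <;>
      simp [Matrix.mul_apply, Matrix.one_apply, Fin.sum_univ_two]

/-- upper transvection unit -/
def TRu (x : S) : (Matrix (Fin 2) (Fin 2) S)ˣ where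
  val := Matrix.of ![![1, x], ![0, 1]]
  inv := Matrix.of ![![1, -x], ![0, 1]]
  val_inv := by
    ext i j
    fin_cases i <;> fin_cases j <;>
      simp [Matrix.mul_apply, Matrix.one_apply, Fin.sum_univ_two]
  inv_val := by
    ext i j
    fin_cases i <;> fin_cases j <;>
      simp [Matrix.mul_apply, Matrix.one_apply, Fin.sum_univ_two]

lemma TLu_mem (x : S) : TLu x ∈ Transvections S := ⟨x, Or.inl rfl⟩
lemma TRu_mem (x : S) : TRu x ∈ Transvections S := ⟨x, Or.inr rfl⟩

lemma TLu_mul_Dunit (x : S) (u v : Sˣ) :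
    TLu x * Dunit u v = Dunit u v * TLu (((v⁻¹ : Sˣ) : S) * x * (u : S)) := by
  ext i j
  fin_cases i <;> fin_cases j <;>
    simp [TLu, Dunit, Dmat, Units.val_mul, Matrix.mul_apply, Fin.sum_univ_two,
      mul_assoc]

lemma TRu_mul_Dunit (x : S) (u v : Sˣ) :
    TRu x * Dunit u v = Dunit u v * TRu (((u⁻¹ : Sˣ) : S) * x * (v : S)) := by
  ext i j
  fin_cases i <;> fin_cases j <;>
    simp [TRu, Dunit, Dmat, Units.val_mul, Matrix.mul_apply, Fin.sum_univ_two,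
      mul_assoc]

end Aux
section Aux2
variable {S : Type*} [Ring S]

lemma transvection_eq (t : (Matrix (Fin 2) (Fin 2) S)ˣ) (ht : t ∈ Transvections S) :
    ∃ x : S, t = TLu x ∨ t = TRu x := by
  obtain ⟨x, hx | hx⟩ := ht
  · exact ⟨x, Or.inl (Units.ext hx)⟩
  · exact ⟨x, Or.inr (Units.ext hx)⟩

lemma comm_diag (u v : Sˣ) {ε : (Matrix (Fin 2) (Fin 2) S)ˣ}
    (hε : ε ∈ Submonoid.closure (Transvections S)) :
    ∃ ε' ∈ Submonoid.closure (Transvections S), ε * Dunit u v = Dunit u v * ε' := by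
  induction hε using Submonoid.closure_induction with
  | mem t ht =>
    obtain ⟨x, rfl | rfl⟩ := transvection_eq t ht
    · exact ⟨_, Submonoid.subset_closure (TLu_mem _), TLu_mul_Dunit x u v⟩
    · exact ⟨_, Submonoid.subset_closure (TRu_mem _), TRu_mul_Dunit x u v⟩
  | one => exact ⟨1, one_mem _, by simp⟩
  | mul a b ha hb iha ihb =>
    obtain ⟨a', ha', haeq⟩ := iha
    obtain ⟨b', hb', hbeq⟩ := ihb
    exact ⟨a' * b', mul_mem ha' hb', by
      rw [mul_assoc, hbeq, ← mul_assoc, haeq, mul_assoc]⟩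

lemma inv_mem_closure_transvections {ε : (Matrix (Fin 2) (Fin 2) S)ˣ}
    (hε : ε ∈ Submonoid.closure (Transvections S)) :
    ε⁻¹ ∈ Submonoid.closure (Transvections S) := by
  induction hε using Submonoid.closure_induction with
  | mem t ht =>
    obtain ⟨x, rfl | rfl⟩ := transvection_eq t ht
    · have h : TLu x * TLu (-x) = 1 := by
        ext i j
        fin_cases i <;> fin_cases j <;>
          simp [TLu, Units.val_mul, Matrix.mul_apply, Matrix.one_apply, Fin.sum_univ_two]
      rw [inv_eq_of_mul_eq_one_right h]
      exact Submonoid.subset_closure (TLu_mem _)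
    · have h : TRu x * TRu (-x) = 1 := by
        ext i j
        fin_cases i <;> fin_cases j <;>
          simp [TRu, Units.val_mul, Matrix.mul_apply, Matrix.one_apply, Fin.sum_univ_two]
      rw [inv_eq_of_mul_eq_one_right h]
      exact Submonoid.subset_closure (TRu_mem _)
  | one => simpa using one_mem _
  | mul a b ha hb iha ihb => rw [_root_.mul_inv_rev]; exact mul_mem ihb iha

end Aux2
section Aux3
variable {R S : Type*} [Ring R] [Ring S]

lemma lift_closure_transvections (φ : R →+* S) (hφ : Function.Surjective φ)
    {ε : (Matrix (Fin 2) (Fin 2) S)ˣ}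
    (hε : ε ∈ Submonoid.closure (Transvections S)) :
    ∃ M : (Matrix (Fin 2) (Fin 2) R)ˣ, (M.val).map φ = ε.val := by
  induction hε using Submonoid.closure_induction with
  | mem t ht =>
    obtain ⟨x, rfl | rfl⟩ := transvection_eq t ht
    · obtain ⟨r, rfl⟩ := hφ x
      refine ⟨TLu r, ?_⟩
      ext i j
      fin_cases i <;> fin_cases j <;> simp [TLu, Matrix.map_apply]
    · obtain ⟨r, rfl⟩ := hφ x
      refine ⟨TRu r, ?_⟩
      ext i j
      fin_cases i <;> fin_cases j <;> simp [TRu, Matrix.map_apply]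
  | one => exact ⟨1, by simp [Matrix.map_one]⟩
  | mul a b ha hb iha ihb =>
    obtain ⟨M, hM⟩ := iha
    obtain ⟨N, hN⟩ := ihb
    exact ⟨M * N, by rw [Units.val_mul, Units.val_mul, Matrix.map_mul, hM, hN]⟩

/-- The subgroup of `GL₂(S)` of elements of the form `D * ε`. -/
def DEgroup (S : Type*) [Ring S] : Subgroup (Matrix (Fin 2) (Fin 2) S)ˣ where
  carrier := {γ | ∃ u v : Sˣ, ∃ ε ∈ Submonoid.closure (Transvections S),
    γ = Dunit u v * ε}
  one_mem' := ⟨1, 1, 1, one_mem _, by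
    have : Dunit (1 : Sˣ) 1 = 1 := Units.ext (by simpa [Dunit] using Dmat_one)
    rw [this, mul_one]⟩
  mul_mem' := by
    rintro γ δ ⟨u, v, ε, hε, rfl⟩ ⟨u', v', ε', hε', rfl⟩
    obtain ⟨ε'', hε'', heq⟩ := comm_diag u' v' hε
    refine ⟨u * u', v * v', ε'' * ε', mul_mem hε'' hε', ?_⟩
    have hD : Dunit u v * Dunit u' v' = Dunit (u * u') (v * v') :=
      Units.ext (by simp [Dunit, Dmat_mul_Dmat])
    calc Dunit u v * ε * (Dunit u' v' * ε')
        = Dunit u v * (ε * Dunit u' v') * ε' := by rw [mul_assoc, mul_assoc, mul_assoc]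
      _ = Dunit u v * (Dunit u' v' * ε'') * ε' := by rw [heq]
      _ = Dunit (u * u') (v * v') * (ε'' * ε') := by
          rw [← mul_assoc, ← mul_assoc, hD, mul_assoc]
  inv_mem' := by
    rintro γ ⟨u, v, ε, hε, rfl⟩
    have hinv : ε⁻¹ ∈ Submonoid.closure (Transvections S) :=
      inv_mem_closure_transvections hε
    obtain ⟨ε', hε', heq⟩ := comm_diag u⁻¹ v⁻¹ hinv
    refine ⟨u⁻¹, v⁻¹, ε', hε', ?_⟩
    have hDinv : (Dunit u v)⁻¹ = Dunit u⁻¹ v⁻¹ := by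
      apply inv_eq_of_mul_eq_one_right
      apply Units.ext
      simp [Dunit, Dmat_mul_Dmat, Dmat_one]
    rw [_root_.mul_inv_rev, hDinv, heq]

end Aux3
section Aux4
variable {S : Type*} [Ring S]

lemma gens_subset_DEgroup :
    Transvections S ∪ Diagonals S ⊆ (DEgroup S : Set (Matrix (Fin 2) (Fin 2) S)ˣ) := by
  rintro γ (ht | ⟨a, b, hab⟩)
  · refine ⟨1, 1, γ, Submonoid.subset_closure ht, ?_⟩
    have : Dunit (1 : Sˣ) 1 = 1 := Units.ext (by simpa [Dunit] using Dmat_one)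
    rw [this, one_mul]
  · -- γ is diagonal, so a and b are units
    have h1 : (γ.val * (γ⁻¹).val) 0 0 = 1 := by rw [γ.mul_inv]; simp [Matrix.one_apply]
    have h2 : ((γ⁻¹).val * γ.val) 0 0 = 1 := by rw [γ.inv_mul]; simp [Matrix.one_apply]
    have h3 : (γ.val * (γ⁻¹).val) 1 1 = 1 := by rw [γ.mul_inv]; simp [Matrix.one_apply]
    have h4 : ((γ⁻¹).val * γ.val) 1 1 = 1 := by rw [γ.inv_mul]; simp [Matrix.one_apply]
    rw [Matrix.mul_apply, Fin.sum_univ_two, hab] at h1 h2 h3 h4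
    simp only [Matrix.of_apply, Matrix.cons_val', Matrix.cons_val_zero, Matrix.cons_val_one,
      Matrix.head_cons, Matrix.head_fin_const, Matrix.empty_val', Matrix.cons_val_fin_one,
      zero_mul, mul_zero, add_zero, zero_add] at h1 h2 h3 h4
    refine ⟨⟨a, (γ⁻¹).val 0 0, h1, h2⟩, ⟨b, (γ⁻¹).val 1 1, h3, h4⟩, 1, one_mem _, ?_⟩
    apply Units.ext
    rw [Units.val_mul, Units.val_one, mul_one]
    exact hab

lemma cyc_unit_smul (u : Sˣ) (w : Fin 2 → S) : cyc ((u : S) • w) = cyc w := by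
  apply le_antisymm
  · rw [cyc, cyc, Submodule.span_le, Set.singleton_subset_iff]
    exact Submodule.smul_mem _ _ (Submodule.subset_span (Set.mem_singleton w))
  · rw [cyc, cyc, Submodule.span_le, Set.singleton_subset_iff]
    have hmem := Submodule.smul_mem (Submodule.span S {(u : S) • w}) ((u⁻¹ : Sˣ) : S)
      (Submodule.subset_span (Set.mem_singleton ((u : S) • w)))
    rwa [smul_smul, Units.inv_mul, one_smul] at hmem

end Aux4

theorem stmt18 {R S : Type*} [Ring R] [Ring S] (φ : R →+* S)
    (hφ : Function.Surjective φ)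
    (hGE : Subgroup.closure (Transvections S ∪ Diagonals S) = ⊤) :
    ∀ q ∈ ProjLine S, ∃ a b : R, Admissible a b ∧ q = cyc ![φ a, φ b] := by
  rintro q ⟨γ, rfl⟩
  have hle : Subgroup.closure (Transvections S ∪ Diagonals S) ≤ DEgroup S :=
    (Subgroup.closure_le _).mpr gens_subset_DEgroup
  have hγ : γ ∈ DEgroup S := hle (hGE ▸ Subgroup.mem_top γ)
  obtain ⟨u, v, ε, hε, rfl⟩ := hγ
  obtain ⟨M, hM⟩ := lift_closure_transvections φ hφ hε
  refine ⟨M.val 0 0, M.val 0 1, ⟨M.val 1 0, M.val 1 1, ?_⟩, ?_⟩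
  · have : Matrix.of ![![M.val 0 0, M.val 0 1], ![M.val 1 0, M.val 1 1]] = M.val := by
      ext i j; fin_cases i <;> fin_cases j <;> rfl
    rw [this]
    exact M.isUnit
  · have hw : Matrix.vecMul ![1, 0] ((Dunit u v * ε).val) =
        (u : S) • ![φ (M.val 0 0), φ (M.val 0 1)] := by
      funext j
      fin_cases j <;>
        simp [Units.val_mul, Dunit, Dmat, Matrix.vecMul, Matrix.mul_apply,
          Fin.sum_univ_two, dotProduct, ← hM, Matrix.map_apply, Units.smul_def]
    rw [hw, cyc_unit_smul]
end
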